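/- Let a, b ∈ (1/4, 1/2) satisfy a + 2b > 1. Then sup_{(ξ,τ)∈ℝ²} ⟨τ+ξ²⟩^{−a} ( ∫_{D(ξ,τ)} ⟨τ−τ₁+(ξ−ξ₁)²⟩^{−2b} ⟨τ₁−ξ₁³⟩^{−2b} dξ₁ dτ₁ )^{1/2} < ∞, where D(ξ,τ) = {(ξ₁,τ₁) ∈ ℝ² : ⟨τ+ξ²⟩ ≥ ⟨τ₁−ξ₁³⟩ and ⟨τ+ξ²⟩ ≥ ⟨τ−τ₁+(ξ−ξ₁)²⟩}. -/

import Mathlib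

open MeasureTheory Real Set

noncomputable section

/-- Japanese bracket `⟨c⟩ = 1 + |c|`. -/
def jb (c : ℝ) : ℝ := 1 + |c|

lemma jb_pos (c : ℝ) : 0 < jb c := by
  have := abs_nonneg c
  simp only [jb]; linarith

lemma one_le_jb (c : ℝ) : 1 ≤ jb c := by
  have := abs_nonneg c
  simp only [jb]; linarith

lemma continuous_jb : Continuous jb := continuous_const.add continuous_abs

lemma integrable_jb_rpow {p : ℝ} (hp : 1 < p) :
    Integrable (fun t : ℝ => jb t ^ (-p)) := by
  have h := integrable_one_add_norm (E := ℝ) (μ := volume) (r := p)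
    (by simpa using hp)
  simpa [jb, Real.norm_eq_abs] using h

lemma quad_factor (ξ : ℝ) :
    ∃ u v : ℝ, ∀ x : ℝ, |x - u| * |x - v| ≤ |x ^ 2 - x + 2 * ξ| := by
  rcases le_or_gt (1 - 8 * ξ) 0 with h | h
  · refine ⟨1/2, 1/2, fun x => ?_⟩
    rw [← abs_mul]
    have h2 : 0 ≤ (x - 1/2) * (x - 1/2) := mul_self_nonneg _
    rw [abs_of_nonneg h2]
    have h1 : (x - 1/2) * (x - 1/2) ≤ x ^ 2 - x + 2 * ξ := by nlinarith
    exact h1.trans (le_abs_self _)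
  · refine ⟨(1 + Real.sqrt (1 - 8 * ξ)) / 2, (1 - Real.sqrt (1 - 8 * ξ)) / 2, fun x => ?_⟩
    have hs : Real.sqrt (1 - 8 * ξ) ^ 2 = 1 - 8 * ξ := Real.sq_sqrt (by linarith)
    rw [← abs_mul]
    have : (x - (1 + Real.sqrt (1 - 8 * ξ)) / 2) * (x - (1 - Real.sqrt (1 - 8 * ξ)) / 2)
        = x ^ 2 - x + 2 * ξ := by linear_combination (-(1 : ℝ)/4) * hs
    rw [this]

/-- Region I estimate in the bilinear Schrödinger–KdV coupling estimate: for
`a, b ∈ (1/4,1/2)` with `a + 2b > 1`, the sup over `(ξ,τ)` of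
`⟨τ+ξ²⟩^{-a} (∫_{D(ξ,τ)} ⟨τ-τ₁+(ξ-ξ₁)²⟩^{-2b} ⟨τ₁-ξ₁³⟩^{-2b} dξ₁ dτ₁)^{1/2}` is finite,
where `D(ξ,τ)` consists of `(ξ₁,τ₁)` with `⟨τ+ξ²⟩ ≥ ⟨τ₁-ξ₁³⟩` and
`⟨τ+ξ²⟩ ≥ ⟨τ-τ₁+(ξ-ξ₁)²⟩`. -/
theorem stmt2 (a b : ℝ) (ha : a ∈ Set.Ioo (1/4 : ℝ) (1/2)) (hb : b ∈ Set.Ioo (1/4 : ℝ) (1/2))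
    (hab : 1 < a + 2 * b) :
    ∃ C : ℝ, ∀ ξ τ : ℝ,
      jb (τ + ξ ^ 2) ^ (-a) *
        (∫ q : ℝ × ℝ in {q : ℝ × ℝ |
            jb (q.2 - q.1 ^ 3) ≤ jb (τ + ξ ^ 2) ∧
            jb (τ - q.2 + (ξ - q.1) ^ 2) ≤ jb (τ + ξ ^ 2)},
          jb (τ - q.2 + (ξ - q.1) ^ 2) ^ (-(2 * b)) * jb (q.2 - q.1 ^ 3) ^ (-(2 * b))) ^ (1/2 : ℝ)
        ≤ C := by
  obtain ⟨ha1, ha2⟩ := ha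
  obtain ⟨hb1, hb2⟩ := hb
  have hp : (1 : ℝ) < 4 * b := by linarith
  set I : ℝ := ∫ t : ℝ, jb t ^ (-(4 * b)) with hIdef
  have hI0 : 0 ≤ I := integral_nonneg fun t => Real.rpow_nonneg (jb_pos t).le _
  have hintI : Integrable (fun t : ℝ => jb t ^ (-(4 * b))) := integrable_jb_rpow hp
  set K : ℝ := 6 * 3 ^ (3⁻¹ : ℝ) * I with hKdef
  have hK0 : 0 ≤ K := by positivity
  refine ⟨K ^ (1/2 : ℝ), fun ξ τ => ?_⟩
  set M := jb (τ + ξ ^ 2) with hM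
  have hM1 : 1 ≤ M := one_le_jb _
  have hM0 : (0 : ℝ) < M := lt_of_lt_of_le one_pos hM1
  set c : ℝ := (3 * M) ^ (3⁻¹ : ℝ) with hc
  have hc0 : 0 ≤ c := Real.rpow_nonneg (by linarith) _
  have hc3 : c * c * c = 3 * M := by
    have : c ^ (3 : ℕ) = 3 * M := by
      rw [hc, ← Real.rpow_natCast ((3 * M) ^ (3⁻¹ : ℝ)) 3, ← Real.rpow_mul (by linarith)]
      norm_num
    calc c * c * c = c ^ (3 : ℕ) := by ring
      _ = 3 * M := this
  obtain ⟨u, v, huv⟩ := quad_factor ξ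
  set T : Set ℝ := Icc (-c) c ∪ Icc (u - c) (u + c) ∪ Icc (v - c) (v + c) with hT
  set D : Set (ℝ × ℝ) := {q : ℝ × ℝ |
      jb (q.2 - q.1 ^ 3) ≤ M ∧ jb (τ - q.2 + (ξ - q.1) ^ 2) ≤ M} with hD
  -- the resonance inclusion
  have hDT : D ⊆ T ×ˢ (univ : Set ℝ) := by
    rintro ⟨x, y⟩ ⟨h1, h2⟩
    refine ⟨?_, mem_univ _⟩
    have e1 : |y - x ^ 3| ≤ M - 1 := by
      have : 1 + |y - x ^ 3| ≤ M := h1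
      linarith
    have e2 : |τ - y + (ξ - x) ^ 2| ≤ M - 1 := by
      have : 1 + |τ - y + (ξ - x) ^ 2| ≤ M := h2
      linarith
    have e0 : |τ + ξ ^ 2| = M - 1 := by
      have : M = 1 + |τ + ξ ^ 2| := hM
      linarith
    have hq : |x ^ 3 - x ^ 2 + 2 * ξ * x| ≤ 3 * M := by
      have hiden : x ^ 3 - x ^ 2 + 2 * ξ * x
          = (τ + ξ ^ 2) - (y - x ^ 3) - (τ - y + (ξ - x) ^ 2) := by ring
      calc |x ^ 3 - x ^ 2 + 2 * ξ * x|
          ≤ |τ + ξ ^ 2| + |y - x ^ 3| + |τ - y + (ξ - x) ^ 2| := by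
            rw [hiden]
            exact (abs_sub _ _).trans (by gcongr; exact abs_sub _ _)
        _ ≤ 3 * M := by linarith
    by_cases hx1 : |x| ≤ c
    · exact Or.inl (Or.inl (abs_le.mp hx1 |> fun h => ⟨by linarith [h.1], h.2⟩))
    by_cases hx2 : |x - u| ≤ c
    · have h' := abs_le.mp hx2
      exact Or.inl (Or.inr ⟨by linarith [h'.1], by linarith [h'.2]⟩)
    by_cases hx3 : |x - v| ≤ c
    · have h' := abs_le.mp hx3
      exact Or.inr ⟨by linarith [h'.1], by linarith [h'.2]⟩
    exfalso
    push_neg at hx1 hx2 hx3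
    have hlt : c * c * c < |x| * (|x - u| * |x - v|) := by
      have h23 : c * c < |x - u| * |x - v| := mul_lt_mul'' hx2 hx3 hc0 hc0
      have := mul_lt_mul'' hx1 h23 hc0 (by positivity)
      calc c * c * c = c * (c * c) := by ring
        _ < |x| * (|x - u| * |x - v|) := this
    have hle : |x| * (|x - u| * |x - v|) ≤ |x ^ 3 - x ^ 2 + 2 * ξ * x| := by
      calc |x| * (|x - u| * |x - v|) ≤ |x| * |x ^ 2 - x + 2 * ξ| :=
            mul_le_mul_of_nonneg_left (huv x) (abs_nonneg x)
        _ = |x * (x ^ 2 - x + 2 * ξ)| := (abs_mul _ _).symm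
        _ = |x ^ 3 - x ^ 2 + 2 * ξ * x| := by ring_nf
    linarith
  -- measure of T
  have hTmeas : MeasurableSet T :=
    ((measurableSet_Icc.union measurableSet_Icc).union measurableSet_Icc)
  have hTvol : volume T ≤ ENNReal.ofReal (6 * c) := by
    have e1 : volume (Icc (-c) c) = ENNReal.ofReal (2 * c) := by
      rw [Real.volume_Icc]; congr 1; ring
    have e2 : volume (Icc (u - c) (u + c)) = ENNReal.ofReal (2 * c) := by
      rw [Real.volume_Icc]; congr 1; ring
    have e3 : volume (Icc (v - c) (v + c)) = ENNReal.ofReal (2 * c) := by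
      rw [Real.volume_Icc]; congr 1; ring
    calc volume T ≤ volume (Icc (-c) c ∪ Icc (u - c) (u + c)) + volume (Icc (v - c) (v + c)) :=
          measure_union_le _ _
      _ ≤ volume (Icc (-c) c) + volume (Icc (u - c) (u + c)) + volume (Icc (v - c) (v + c)) := by
          gcongr; exact measure_union_le _ _
      _ = ENNReal.ofReal (2 * c) + ENNReal.ofReal (2 * c) + ENNReal.ofReal (2 * c) := by
          rw [e1, e2, e3]
      _ = ENNReal.ofReal (6 * c) := by
          rw [← ENNReal.ofReal_add (by positivity) (by positivity),
            ← ENNReal.ofReal_add (by positivity) (by positivity)]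
          congr 1; ring
  have hTfin : volume T < ⊤ := lt_of_le_of_lt hTvol ENNReal.ofReal_lt_top
  have hTtoReal : (volume T).toReal ≤ 6 * c :=
    ENNReal.toReal_le_of_le_ofReal (by positivity) hTvol
  -- the two auxiliary functions
  set g₁ : ℝ × ℝ → ℝ := fun q => jb (τ - q.2 + (ξ - q.1) ^ 2) ^ (-(4 * b)) with hg₁
  set g₂ : ℝ × ℝ → ℝ := fun q => jb (q.2 - q.1 ^ 3) ^ (-(4 * b)) with hg₂
  have hcont1 : Continuous g₁ := by
    apply Continuous.rpow_const
    · exact continuous_jb.comp (by fun_prop)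
    · intro q; exact Or.inl (jb_pos _).ne'
  have hcont2 : Continuous g₂ := by
    apply Continuous.rpow_const
    · exact continuous_jb.comp (by fun_prop)
    · intro q; exact Or.inl (jb_pos _).ne'
  -- rewrite the restricted measure as a product
  have hρ : (volume.restrict T).prod (volume : Measure ℝ)
      = (volume : Measure (ℝ × ℝ)).restrict (T ×ˢ (univ : Set ℝ)) := by
    rw [Measure.volume_eq_prod, ← Measure.prod_restrict, Measure.restrict_univ]
  -- integrability of g₁ and g₂ on T ×ˢ univ
  have hslice1 : ∀ x : ℝ, Integrable (fun y : ℝ => g₁ (x, y)) := by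
    intro x
    have : (fun y : ℝ => g₁ (x, y))
        = fun y : ℝ => (fun t : ℝ => jb t ^ (-(4 * b))) ((τ + (ξ - x) ^ 2) - y) := by
      funext y; simp only [hg₁]; ring_nf
    rw [this]
    exact hintI.comp_sub_left _
  have hslice2 : ∀ x : ℝ, Integrable (fun y : ℝ => g₂ (x, y)) := by
    intro x
    have : (fun y : ℝ => g₂ (x, y))
        = fun y : ℝ => (fun t : ℝ => jb t ^ (-(4 * b))) (y - x ^ 3) := by
      funext y; simp only [hg₂]
    rw [this]
    exact hintI.comp_sub_right _
  have hsliceI1 : ∀ x : ℝ, (∫ y : ℝ, g₁ (x, y)) = I := by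
    intro x
    have : (fun y : ℝ => g₁ (x, y))
        = fun y : ℝ => (fun t : ℝ => jb t ^ (-(4 * b))) ((τ + (ξ - x) ^ 2) - y) := by
      funext y; simp only [hg₁]; ring_nf
    rw [this, integral_sub_left_eq_self (fun t : ℝ => jb t ^ (-(4 * b))) volume _]
  have hsliceI2 : ∀ x : ℝ, (∫ y : ℝ, g₂ (x, y)) = I := by
    intro x
    have : (fun y : ℝ => g₂ (x, y))
        = fun y : ℝ => (fun t : ℝ => jb t ^ (-(4 * b))) (y - x ^ 3) := by
      funext y; simp only [hg₂]
    rw [this, integral_sub_right_eq_self (fun t : ℝ => jb t ^ (-(4 * b))) _]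
  have hintprod : ∀ g : ℝ × ℝ → ℝ, Continuous g → (∀ q, 0 ≤ g q) →
      (∀ x : ℝ, Integrable (fun y : ℝ => g (x, y))) →
      (∀ x : ℝ, (∫ y : ℝ, g (x, y)) = I) → IntegrableOn g (T ×ˢ (univ : Set ℝ)) := by
    intro g hgc hg0 hgs hgI
    have : Integrable g ((volume.restrict T).prod (volume : Measure ℝ)) := by
      refine (integrable_prod_iff (hgc.aestronglyMeasurable)).2 ⟨?_, ?_⟩
      · exact Filter.Eventually.of_forall fun x => hgs x
      · have : (fun x : ℝ => ∫ y : ℝ, ‖g (x, y)‖) = fun _ : ℝ => I := by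
          funext x
          rw [← hgI x]
          congr 1; funext y
          rw [Real.norm_eq_abs, abs_of_nonneg (hg0 _)]
        rw [this]
        exact integrableOn_const hTfin.ne
    rwa [hρ] at this
  have hint1 : IntegrableOn g₁ (T ×ˢ (univ : Set ℝ)) :=
    hintprod g₁ hcont1 (fun q => Real.rpow_nonneg (jb_pos _).le _) hslice1 hsliceI1
  have hint2 : IntegrableOn g₂ (T ×ˢ (univ : Set ℝ)) :=
    hintprod g₂ hcont2 (fun q => Real.rpow_nonneg (jb_pos _).le _) hslice2 hsliceI2
  set G : ℝ × ℝ → ℝ := fun q => (g₁ q + g₂ q) / 2 with hG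
  have hintG : IntegrableOn G (T ×ˢ (univ : Set ℝ)) := (hint1.add hint2).div_const 2
  set F : ℝ × ℝ → ℝ := fun q =>
    jb (τ - q.2 + (ξ - q.1) ^ 2) ^ (-(2 * b)) * jb (q.2 - q.1 ^ 3) ^ (-(2 * b)) with hF
  have hF0 : ∀ q, 0 ≤ F q := fun q =>
    mul_nonneg (Real.rpow_nonneg (jb_pos _).le _) (Real.rpow_nonneg (jb_pos _).le _)
  have hG0 : ∀ q, 0 ≤ G q := fun q => by
    have := Real.rpow_nonneg (jb_pos (τ - q.2 + (ξ - q.1) ^ 2)).le (-(4 * b))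
    have := Real.rpow_nonneg (jb_pos (q.2 - q.1 ^ 3)).le (-(4 * b))
    simp only [hG]; positivity
  have hFG : ∀ q, F q ≤ G q := by
    intro q
    have h2 := two_mul_le_add_sq (jb (τ - q.2 + (ξ - q.1) ^ 2) ^ (-(2 * b)))
      (jb (q.2 - q.1 ^ 3) ^ (-(2 * b)))
    have e1 : (jb (τ - q.2 + (ξ - q.1) ^ 2) ^ (-(2 * b))) ^ 2 = g₁ q := by
      rw [sq, ← Real.rpow_add (jb_pos _)]
      simp only [hg₁]; congr 1; ring
    have e2 : (jb (q.2 - q.1 ^ 3) ^ (-(2 * b))) ^ 2 = g₂ q := by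
      rw [sq, ← Real.rpow_add (jb_pos _)]
      simp only [hg₂]; congr 1; ring
    simp only [hF, hG]
    rw [← e1, ← e2]
    linarith
  have hcontF : Continuous F := by
    apply Continuous.mul <;> apply Continuous.rpow_const
    · exact continuous_jb.comp (by fun_prop)
    · intro q; exact Or.inl (jb_pos _).ne'
    · exact continuous_jb.comp (by fun_prop)
    · intro q; exact Or.inl (jb_pos _).ne'
  have hDmeas : MeasurableSet D := by
    have : D = {q : ℝ × ℝ | jb (q.2 - q.1 ^ 3) ≤ M}
        ∩ {q : ℝ × ℝ | jb (τ - q.2 + (ξ - q.1) ^ 2) ≤ M} := rfl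
    rw [this]
    refine MeasurableSet.inter ?_ ?_
    · exact (isClosed_le (continuous_jb.comp (by fun_prop)) continuous_const).measurableSet
    · exact (isClosed_le (continuous_jb.comp (by fun_prop)) continuous_const).measurableSet
  have hGD : IntegrableOn G D := hintG.mono_set hDT
  have hFD : IntegrableOn F D := by
    refine hGD.mono' (hcontF.aestronglyMeasurable.restrict) ?_
    refine Filter.Eventually.of_forall fun q => ?_
    rw [Real.norm_eq_abs, abs_of_nonneg (hF0 q)]
    exact hFG q
  -- main integral bound
  have key : (∫ q in D, F q) ≤ K * M ^ (3⁻¹ : ℝ) := by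
    have step1 : (∫ q in D, F q) ≤ ∫ q in D, G q :=
      setIntegral_mono_on hFD hGD hDmeas fun q _ => hFG q
    have step2 : (∫ q in D, G q) ≤ ∫ q in T ×ˢ (univ : Set ℝ), G q :=
      setIntegral_mono_set hintG (Filter.Eventually.of_forall hG0)
        (HasSubset.Subset.eventuallyLE hDT)
    have step3 : (∫ q in T ×ˢ (univ : Set ℝ), G q) = (volume T).toReal * I := by
      have hintG' : IntegrableOn G (T ×ˢ (univ : Set ℝ))
          ((volume : Measure ℝ).prod (volume : Measure ℝ)) := by
        rwa [← Measure.volume_eq_prod]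
      rw [Measure.volume_eq_prod, setIntegral_prod G hintG']
      have : ∀ x : ℝ, (∫ y in (univ : Set ℝ), G (x, y)) = I := by
        intro x
        rw [Measure.restrict_univ]
        have : (∫ y : ℝ, G (x, y)) = ((∫ y : ℝ, g₁ (x, y)) + ∫ y : ℝ, g₂ (x, y)) / 2 := by
          simp only [hG]
          rw [integral_div, integral_add (hslice1 x) (hslice2 x)]
        rw [this, hsliceI1 x, hsliceI2 x]
        ring
      rw [setIntegral_congr_fun hTmeas fun x _ => this x, setIntegral_const, smul_eq_mul, measureReal_def]
    have step4 : (volume T).toReal * I ≤ 6 * c * I :=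
      mul_le_mul_of_nonneg_right hTtoReal hI0
    have step5 : 6 * c * I = K * M ^ (3⁻¹ : ℝ) := by
      rw [hKdef, hc, Real.mul_rpow (by norm_num) hM0.le]
      ring
    calc (∫ q in D, F q) ≤ ∫ q in D, G q := step1
      _ ≤ ∫ q in T ×ˢ (univ : Set ℝ), G q := step2
      _ = (volume T).toReal * I := step3
      _ ≤ 6 * c * I := step4
      _ = K * M ^ (3⁻¹ : ℝ) := step5
  -- conclude
  have hFint_nonneg : 0 ≤ ∫ q in D, F q := setIntegral_nonneg hDmeas fun q _ => hF0 q
  calc M ^ (-a) * (∫ q in D, F q) ^ (1/2 : ℝ)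
      ≤ M ^ (-a) * (K * M ^ (3⁻¹ : ℝ)) ^ (1/2 : ℝ) := by
        apply mul_le_mul_of_nonneg_left _ (Real.rpow_nonneg hM0.le _)
        exact Real.rpow_le_rpow hFint_nonneg key (by norm_num)
    _ = K ^ (1/2 : ℝ) * (M ^ (-a) * M ^ (6⁻¹ : ℝ)) := by
        rw [Real.mul_rpow hK0 (Real.rpow_nonneg hM0.le _),
          ← Real.rpow_mul hM0.le]
        norm_num
        ring
    _ = K ^ (1/2 : ℝ) * M ^ (-a + 6⁻¹ : ℝ) := by
        rw [← Real.rpow_add hM0]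
    _ ≤ K ^ (1/2 : ℝ) * 1 := by
        apply mul_le_mul_of_nonneg_left _ (Real.rpow_nonneg hK0 _)
        exact Real.rpow_le_one_of_one_le_of_nonpos hM1 (by linarith)
    _ = K ^ (1/2 : ℝ) := mul_one _

end
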